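/- For integers m, n ≥ 3, the connected safe number of K_m □ K_n equals α(m,n) := min over all positive integers m_1+m_2=m, n_1+n_2=n of [ mn − m_1n_1 − m_2n_2 + max{ ⌈(max{m_1n_1, m_2n_2} − mn + m_1n_1 + m_2n_2)/2⌉, 1 } ]. -/

import Mathlib

open SimpleGraph

noncomputable section

/-- The Cartesian (box) product of the complete graphs `K_m` and `K_n`. -/
def KK (m n : ℕ) : SimpleGraph (Fin m × Fin n) :=
  (⊤ : SimpleGraph (Fin m)) □ (⊤ : SimpleGraph (Fin n))

variable {V : Type*}

/-- `S` is a safe set of `G`: every component of `G[S]` is at least as large as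
every component of `G - S` joined to it by an edge. -/
def IsSafeSet (G : SimpleGraph V) (S : Finset V) : Prop :=
  ∀ C : (G.induce (S : Set V)).ConnectedComponent,
    ∀ D : (G.induce ((S : Set V)ᶜ)).ConnectedComponent,
      (∃ u ∈ C.supp, ∃ v ∈ D.supp, G.Adj u.1 v.1) →
        Nat.card D.supp ≤ Nat.card C.supp

/-- A connected safe set: a safe set inducing a connected subgraph. -/
def IsConnectedSafeSet (G : SimpleGraph V) (S : Finset V) : Prop :=
  IsSafeSet G S ∧ (G.induce (S : Set V)).Connected

/-- The safe number `s(G)`. -/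
def safeNumber (G : SimpleGraph V) : ℕ :=
  sInf {k | ∃ S : Finset V, IsSafeSet G S ∧ S.card = k}

/-- The connected safe number `cs(G)`. -/
def connectedSafeNumber (G : SimpleGraph V) : ℕ :=
  sInf {k | ∃ S : Finset V, IsConnectedSafeSet G S ∧ S.card = k}

/-- `S` is a vertex cut: `G - S` is disconnected. -/
def IsVertexCut (G : SimpleGraph V) (S : Finset V) : Prop :=
  ¬ (G.induce ((S : Set V)ᶜ)).Preconnected

end

/-- The quantity `α(m,n)` from the paper. -/
noncomputable def alpha (m n : ℕ) : ℕ :=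
  sInf {k : ℕ | ∃ m₁ m₂ n₁ n₂ : ℕ, 0 < m₁ ∧ 0 < m₂ ∧ 0 < n₁ ∧ 0 < n₂ ∧
    m₁ + m₂ = m ∧ n₁ + n₂ = n ∧
    (k : ℤ) = (m : ℤ) * n - (m₁ : ℤ) * n₁ - (m₂ : ℤ) * n₂ +
      max ⌈((max ((m₁ : ℤ) * n₁) ((m₂ : ℤ) * n₂) - (m : ℤ) * n + (m₁ : ℤ) * n₁ +
            (m₂ : ℤ) * n₂ : ℤ) : ℚ) / 2⌉ 1}

/-! ### Auxiliary material -/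

namespace CSN

open Set

variable {V : Type*}

lemma induce_adj' {G : SimpleGraph V} {T : Set V} {u v : ↥T} :
    (G.induce T).Adj u v ↔ G.Adj ↑u ↑v := Iff.rfl

lemma kk_adj {m n : ℕ} {u v : Fin m × Fin n} :
    (KK m n).Adj u v ↔ (u.1 ≠ v.1 ∧ u.2 = v.2) ∨ (u.2 ≠ v.2 ∧ u.1 = v.1) := by
  simp [KK, boxProd_adj, and_comm]

lemma walk_invariant {G : SimpleGraph V} {T : Set V} {P : V → Prop}
    (hP : ∀ x y : V, x ∈ T → y ∈ T → G.Adj x y → P x → P y)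
    {x y : ↥T} (w : (G.induce T).Walk x y) (hx : P ↑x) : P ↑y := by
  induction w with
  | nil => exact hx
  | cons h p ih => exact ih (hP _ _ (Subtype.coe_prop _) (Subtype.coe_prop _) h hx)

lemma reach_invariant {G : SimpleGraph V} {T : Set V} {P : V → Prop}
    (hP : ∀ x y : V, x ∈ T → y ∈ T → G.Adj x y → P x → P y)
    {x y : ↥T} (h : (G.induce T).Reachable x y) (hx : P ↑x) : P ↑y := by
  obtain ⟨w⟩ := h; exact walk_invariant hP w hx

lemma ncard_sprod {α β : Type*} (s : Set α) (t : Set β) :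
    (s ×ˢ t).ncard = s.ncard * t.ncard := by
  rw [← Nat.card_coe_set_eq, ← Nat.card_coe_set_eq, ← Nat.card_coe_set_eq,
    Nat.card_congr (Equiv.Set.prod s t), Nat.card_prod]

lemma ceil_half_le {x y : ℤ} (h : x ≤ 2 * y) : ⌈((x : ℚ)) / 2⌉ ≤ y := by
  rw [Int.ceil_le, div_le_iff₀ (by norm_num : (0:ℚ) < 2)]
  exact_mod_cast (by linarith : x ≤ y * 2)

lemma le_two_ceil_half (x : ℤ) : x ≤ 2 * ⌈((x : ℚ)) / 2⌉ := by
  have h := Int.le_ceil ((x : ℚ) / 2)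
  have h2 : (x : ℚ) ≤ 2 * (⌈((x : ℚ)) / 2⌉ : ℚ) := by linarith
  exact_mod_cast h2

lemma supp_ncard_eq {G : SimpleGraph V} {T : Set V} (h : (G.induce T).Preconnected)
    (C : (G.induce T).ConnectedComponent) : Nat.card C.supp = T.ncard := by
  have hs : C.supp = Set.univ := by
    obtain ⟨v, hv⟩ := C.exists_rep
    ext w
    simp only [ConnectedComponent.mem_supp_iff, Set.mem_univ, iff_true, ← hv]
    exact ConnectedComponent.sound (h w v)
  rw [hs, Nat.card_congr (Equiv.Set.univ _), Nat.card_coe_set_eq]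

lemma supp_card_image {G : SimpleGraph V} {T : Set V}
    (D : (G.induce T).ConnectedComponent) :
    Nat.card D.supp = (Subtype.val '' D.supp).ncard := by
  rw [Nat.card_coe_set_eq, Set.ncard_image_of_injective _ Subtype.val_injective]

/-- The vertex set (in the ambient type) of a connected component of an induced subgraph. -/
def Dset {G : SimpleGraph V} {T : Set V} (c : (G.induce T).ConnectedComponent) : Set V :=
  Subtype.val '' c.supp

lemma mem_Dset {G : SimpleGraph V} {T : Set V} {c : (G.induce T).ConnectedComponent} {z : V} :
    z ∈ Dset c ↔ ∃ hz : z ∈ T, (G.induce T).connectedComponentMk ⟨z, hz⟩ = c := by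
  constructor
  · rintro ⟨u, hu, rfl⟩
    exact ⟨u.2, by rwa [ConnectedComponent.mem_supp_iff] at hu⟩
  · rintro ⟨hz, hc⟩
    exact ⟨⟨z, hz⟩, by rwa [ConnectedComponent.mem_supp_iff], rfl⟩

lemma Dset_subset {G : SimpleGraph V} {T : Set V} (c : (G.induce T).ConnectedComponent) :
    Dset c ⊆ T := by rintro z ⟨u, _, rfl⟩; exact u.2

lemma Dset_ncard {G : SimpleGraph V} {T : Set V} (c : (G.induce T).ConnectedComponent) :
    Nat.card c.supp = (Dset c).ncard := supp_card_image c

/-- Rows met by a component. -/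
def RowsC {m n : ℕ} {T : Set (Fin m × Fin n)}
    (c : ((KK m n).induce T).ConnectedComponent) : Set (Fin m) := Prod.fst '' Dset c

/-- Columns met by a component. -/
def ColsC {m n : ℕ} {T : Set (Fin m × Fin n)}
    (c : ((KK m n).induce T).ConnectedComponent) : Set (Fin n) := Prod.snd '' Dset c

lemma mem_RowsC {m n : ℕ} {T : Set (Fin m × Fin n)}
    {c : ((KK m n).induce T).ConnectedComponent} {r : Fin m} :
    r ∈ RowsC c ↔ ∃ z ∈ Dset c, z.1 = r := by
  simp [RowsC]

lemma mem_ColsC {m n : ℕ} {T : Set (Fin m × Fin n)}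
    {c : ((KK m n).induce T).ConnectedComponent} {j : Fin n} :
    j ∈ ColsC c ↔ ∃ z ∈ Dset c, z.2 = j := by
  simp [ColsC]

/-- Two vertices outside `S` sharing a row or a column are in the same component. -/
lemma same_comp {m n : ℕ} {T : Set (Fin m × Fin n)} {z w : Fin m × Fin n}
    (hz : z ∈ T) (hw : w ∈ T) (h : z.1 = w.1 ∨ z.2 = w.2) :
    ((KK m n).induce T).connectedComponentMk ⟨z, hz⟩ =
      ((KK m n).induce T).connectedComponentMk ⟨w, hw⟩ := by
  by_cases he : z = w
  · subst he; rfl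
  · have hadj : ((KK m n).induce T).Adj ⟨z, hz⟩ ⟨w, hw⟩ := by
      rw [induce_adj', kk_adj]
      rcases h with h1 | h2
      · refine Or.inr ⟨fun hs => he ?_, h1⟩
        exact Prod.ext h1 hs
      · refine Or.inl ⟨fun hs => he ?_, h2⟩
        exact Prod.ext hs h2
    exact ConnectedComponent.sound hadj.reachable

lemma comp_eq_of_rows {m n : ℕ} {T : Set (Fin m × Fin n)}
    {c c' : ((KK m n).induce T).ConnectedComponent} {r : Fin m}
    (h1 : r ∈ RowsC c) (h2 : r ∈ RowsC c') : c = c' := by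
  obtain ⟨z, hz, hz1⟩ := mem_RowsC.mp h1
  obtain ⟨w, hw, hw1⟩ := mem_RowsC.mp h2
  obtain ⟨hzT, hzc⟩ := mem_Dset.mp hz
  obtain ⟨hwT, hwc⟩ := mem_Dset.mp hw
  rw [← hzc, ← hwc]
  exact same_comp hzT hwT (Or.inl (hz1.trans hw1.symm))

lemma comp_eq_of_cols {m n : ℕ} {T : Set (Fin m × Fin n)}
    {c c' : ((KK m n).induce T).ConnectedComponent} {j : Fin n}
    (h1 : j ∈ ColsC c) (h2 : j ∈ ColsC c') : c = c' := by
  obtain ⟨z, hz, hz1⟩ := mem_ColsC.mp h1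
  obtain ⟨w, hw, hw1⟩ := mem_ColsC.mp h2
  obtain ⟨hzT, hzc⟩ := mem_Dset.mp hz
  obtain ⟨hwT, hwc⟩ := mem_Dset.mp hw
  rw [← hzc, ← hwc]
  exact same_comp hzT hwT (Or.inr (hz1.trans hw1.symm))

lemma alpha_le {m n : ℕ} (m₁ m₂ n₁ n₂ : ℕ) (h1 : 0 < m₁) (h2 : 0 < m₂) (h3 : 0 < n₁)
    (h4 : 0 < n₂) (hmm : m₁ + m₂ = m) (hnn : n₁ + n₂ = n) {c : ℕ}
    (hc1 : max ((m₁ : ℤ) * n₁) ((m₂ : ℤ) * n₂) + ((m : ℤ) * n - (m₁ : ℤ) * n₁ - (m₂ : ℤ) * n₂)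
      ≤ 2 * (c : ℤ))
    (hc2 : (m : ℤ) * n - (m₁ : ℤ) * n₁ - (m₂ : ℤ) * n₂ + 1 ≤ (c : ℤ)) :
    alpha m n ≤ c := by
  set cr : ℤ := (m : ℤ) * n - (m₁ : ℤ) * n₁ - (m₂ : ℤ) * n₂ with hcr
  set mx : ℤ := max ((m₁ : ℤ) * n₁) ((m₂ : ℤ) * n₂) with hmx
  have hc : cr + max ⌈((mx - (m : ℤ) * n + (m₁ : ℤ) * n₁ + (m₂ : ℤ) * n₂ : ℤ) : ℚ) / 2⌉ 1
      ≤ (c : ℤ) := by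
    have he : mx - (m : ℤ) * n + (m₁ : ℤ) * n₁ + (m₂ : ℤ) * n₂ = mx - cr := by rw [hcr]; ring
    rw [he]
    have hceil : ⌈((mx - cr : ℤ) : ℚ) / 2⌉ ≤ (c : ℤ) - cr := ceil_half_le (by linarith)
    have := max_le hceil (by linarith : (1:ℤ) ≤ (c:ℤ) - cr)
    linarith
  set R : ℤ := cr + max ⌈((mx - (m : ℤ) * n + (m₁ : ℤ) * n₁ + (m₂ : ℤ) * n₂ : ℤ) : ℚ) / 2⌉ 1
    with hR
  have hcross : cr = (m₁ : ℤ) * n₂ + (m₂ : ℤ) * n₁ := by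
    rw [hcr, ← hmm, ← hnn]; push_cast; ring
  have hR0 : 0 ≤ R := by
    have h5 : (0 : ℤ) ≤ (m₁ : ℤ) * n₂ + (m₂ : ℤ) * n₁ := by positivity
    have h6 : (1 : ℤ) ≤ max ⌈((mx - (m : ℤ) * n + (m₁ : ℤ) * n₁ + (m₂ : ℤ) * n₂ : ℤ) : ℚ) / 2⌉ 1 :=
      le_max_right _ _
    rw [hR, hcross]; linarith
  have hmem : R.toNat ∈ {k : ℕ | ∃ m₁ m₂ n₁ n₂ : ℕ, 0 < m₁ ∧ 0 < m₂ ∧ 0 < n₁ ∧ 0 < n₂ ∧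
      m₁ + m₂ = m ∧ n₁ + n₂ = n ∧
      (k : ℤ) = (m : ℤ) * n - (m₁ : ℤ) * n₁ - (m₂ : ℤ) * n₂ +
        max ⌈((max ((m₁ : ℤ) * n₁) ((m₂ : ℤ) * n₂) - (m : ℤ) * n + (m₁ : ℤ) * n₁ +
              (m₂ : ℤ) * n₂ : ℤ) : ℚ) / 2⌉ 1} :=
    ⟨m₁, m₂, n₁, n₂, h1, h2, h3, h4, hmm, hnn, by rw [Int.toNat_of_nonneg hR0]⟩
  have h6 : alpha m n ≤ R.toNat := Nat.sInf_le hmem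
  have h7 : R.toNat ≤ c := by
    rw [← Nat.cast_le (α := ℤ), Int.toNat_of_nonneg hR0]
    exact le_trans (le_of_eq rfl) hc
  omega

end CSN

namespace CSN

open Set

lemma encard_le_of_ncard_le {α β : Type*} [Finite α] [Finite β] {s : Set α} {t : Set β}
    (h : s.ncard ≤ t.ncard) : s.encard ≤ t.encard := by
  rw [← Set.Finite.cast_ncard_eq (Set.toFinite s), ← Set.Finite.cast_ncard_eq (Set.toFinite t)]
  exact_mod_cast h

lemma Dset_nonempty {V : Type*} {G : SimpleGraph V} {T : Set V}
    (c : (G.induce T).ConnectedComponent) : (Dset c).Nonempty := by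
  obtain ⟨u, hu⟩ := c.exists_rep
  exact ⟨↑u, u, ConnectedComponent.mem_supp_iff _ _ |>.mpr hu, rfl⟩

set_option maxHeartbeats 1000000 in
lemma lower_bound {m n : ℕ} (hm : 3 ≤ m) (hn : 3 ≤ n) (S : Finset (Fin m × Fin n))
    (hsafe : IsSafeSet (KK m n) S)
    (hconn : ((KK m n).induce (S : Set (Fin m × Fin n))).Connected) :
    alpha m n ≤ S.card := by
  classical
  set Sset : Set (Fin m × Fin n) := (S : Set (Fin m × Fin n)) with hSset
  set T : Set (Fin m × Fin n) := Ssetᶜ with hT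
  have hcardV : Nat.card (Fin m × Fin n) = m * n := by simp
  have hScard : Sset.ncard = S.card := Set.ncard_coe_finset S
  have htot : S.card + T.ncard = m * n := by
    rw [← hScard, hT, Set.ncard_add_ncard_compl]; exact hcardV
  have hCsupp : ∀ C : ((KK m n).induce Sset).ConnectedComponent,
      Nat.card C.supp = S.card := fun C => by
    rw [supp_ncard_eq hconn.preconnected C, hScard]
  have hSne : Sset.Nonempty := by
    obtain ⟨⟨v, hv⟩⟩ := hconn.nonempty; exact ⟨v, hv⟩
  have hsafeD : ∀ (D : ((KK m n).induce T).ConnectedComponent) (u : Fin m × Fin n) (v : ↥T),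
      u ∈ Sset → v ∈ D.supp → (KK m n).Adj u ↑v → (Dset D).ncard ≤ S.card := by
    intro D u v hu hv hadj
    have h1 := hsafe (((KK m n).induce Sset).connectedComponentMk ⟨u, hu⟩) D
      ⟨⟨u, hu⟩, by rw [ConnectedComponent.mem_supp_iff], v, hv, hadj⟩
    rw [hCsupp] at h1
    rw [← Dset_ncard]; exact h1
  by_cases hpre : ((KK m n).induce T).Preconnected
  · -- G - S is connected (or empty)
    have h2 : m * n ≤ 2 * S.card := by
      rcases T.eq_empty_or_nonempty with hTe | ⟨t0, ht0⟩
      · have h3 : T.ncard = 0 := by rw [hTe, Set.ncard_empty]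
        omega
      · obtain ⟨s0, hs0⟩ := hSne
        have hTS : ∀ D : ((KK m n).induce T).ConnectedComponent,
            (Dset D).ncard = T.ncard := fun D => by
          rw [← Dset_ncard, supp_ncard_eq hpre]
        have hedge : ∃ (u : Fin m × Fin n) (v : ↥T), u ∈ Sset ∧ (KK m n).Adj u ↑v := by
          by_cases ha : (t0.1, s0.2) ∈ Sset
          · refine ⟨(t0.1, s0.2), ⟨t0, ht0⟩, ha, ?_⟩
            rw [kk_adj]
            refine Or.inr ⟨fun hs => ?_, rfl⟩
            have : (t0.1, s0.2) = t0 := Prod.ext rfl hs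
            rw [this] at ha; exact ht0 ha
          · have haT : (t0.1, s0.2) ∈ T := ha
            refine ⟨s0, ⟨(t0.1, s0.2), haT⟩, hs0, ?_⟩
            rw [kk_adj]
            refine Or.inl ⟨fun hs => ?_, rfl⟩
            have : s0 = (t0.1, s0.2) := Prod.ext hs rfl
            rw [← this] at haT; exact haT hs0
        obtain ⟨u, v, hu, hadj⟩ := hedge
        have h4 := hsafeD (((KK m n).induce T).connectedComponentMk v) u v hu
          (by rw [ConnectedComponent.mem_supp_iff]) hadj
        rw [hTS] at h4
        omega
    -- use the partition (1, m-1, 1, n-1)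
    obtain ⟨m₂, hm2⟩ : ∃ m₂, m = 1 + m₂ := ⟨m - 1, by omega⟩
    obtain ⟨n₂, hn2⟩ : ∃ n₂, n = 1 + n₂ := ⟨n - 1, by omega⟩
    have hZ : ((m : ℤ)) * n = (1 + (m₂ : ℤ)) * (1 + (n₂ : ℤ)) := by
      have e1 : (m : ℤ) = 1 + m₂ := by exact_mod_cast congrArg (Nat.cast : ℕ → ℤ) hm2
      have e2 : (n : ℤ) = 1 + n₂ := by exact_mod_cast congrArg (Nat.cast : ℕ → ℤ) hn2
      rw [e1, e2]
    have hm2' : (2 : ℤ) ≤ m₂ := by omega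
    have hn2' : (2 : ℤ) ≤ n₂ := by omega
    have hSc : (m : ℤ) * n ≤ 2 * (S.card : ℤ) := by exact_mod_cast h2
    apply alpha_le 1 m₂ 1 n₂ (by omega) (by omega) (by omega) (by omega) (by omega) (by omega)
    · -- max block inequality
      push_cast
      rw [hZ, max_eq_right (by nlinarith : (1 : ℤ) ≤ (m₂ : ℤ) * n₂)]
      nlinarith
    · -- cross + 1 ≤ S.card
      push_cast
      rw [hZ]
      have hcard_big : (m₂ : ℤ) + n₂ + 1 ≤ (S.card : ℤ) := by
        have hq2 : (m : ℤ) * n ≥ 2 * (m₂ + n₂) + 1 := by rw [hZ]; nlinarith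
        omega
      nlinarith
  · -- G - S is disconnected
    rw [SimpleGraph.Preconnected] at hpre
    push_neg at hpre
    obtain ⟨x, y, hxy⟩ := hpre
    have hxyne : ((KK m n).induce T).connectedComponentMk x ≠
        ((KK m n).induce T).connectedComponentMk y :=
      fun h => hxy (ConnectedComponent.exact h)
    have hfin : Finite (((KK m n).induce T).ConnectedComponent) :=
      Finite.of_surjective ((KK m n).induce T).connectedComponentMk fun c => c.exists_rep
    have hnecomp : Nonempty (((KK m n).induce T).ConnectedComponent) :=
      ⟨((KK m n).induce T).connectedComponentMk x⟩
    obtain ⟨Dstar, hDstar⟩ := Finite.exists_max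
      (fun c : ((KK m n).induce T).ConnectedComponent => (RowsC c).ncard * (ColsC c).ncard)
    obtain ⟨c0, hc0⟩ : ∃ c0 : ((KK m n).induce T).ConnectedComponent, c0 ≠ Dstar := by
      by_cases hx : ((KK m n).induce T).connectedComponentMk x = Dstar
      · exact ⟨((KK m n).induce T).connectedComponentMk y,
          fun h => hxyne (hx.trans h.symm)⟩
      · exact ⟨_, hx⟩
    set R1 : Set (Fin m) := RowsC Dstar with hR1
    set C1 : Set (Fin n) := ColsC Dstar with hC1
    obtain ⟨zs, hzs⟩ := Dset_nonempty Dstar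
    obtain ⟨z0, hz0⟩ := Dset_nonempty c0
    have hzsR : zs.1 ∈ R1 := ⟨zs, hzs, rfl⟩
    have hzsC : zs.2 ∈ C1 := ⟨zs, hzs, rfl⟩
    have hz0R : z0.1 ∈ RowsC c0 := ⟨z0, hz0, rfl⟩
    have hz0C : z0.2 ∈ ColsC c0 := ⟨z0, hz0, rfl⟩
    have hz0nR : z0.1 ∉ R1 := fun h => hc0 (comp_eq_of_rows hz0R h)
    have hz0nC : z0.2 ∉ C1 := fun h => hc0 (comp_eq_of_cols hz0C h)
    set m₁ := R1.ncard with hm₁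
    set n₁ := C1.ncard with hn₁
    have hm₁pos : 0 < m₁ := (Set.ncard_pos (Set.toFinite _)).mpr ⟨zs.1, hzsR⟩
    have hn₁pos : 0 < n₁ := (Set.ncard_pos (Set.toFinite _)).mpr ⟨zs.2, hzsC⟩
    have hm₁lt : m₁ < m := by
      have hne : R1 ≠ Set.univ := fun h => hz0nR (by rw [h]; exact Set.mem_univ _)
      have h2 := Set.ncard_lt_ncard (Set.ssubset_univ_iff.mpr hne) (Set.toFinite _)
      simpa [Set.ncard_univ] using h2
    have hn₁lt : n₁ < n := by
      have hne : C1 ≠ Set.univ := fun h => hz0nC (by rw [h]; exact Set.mem_univ _)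
      have h2 := Set.ncard_lt_ncard (Set.ssubset_univ_iff.mpr hne) (Set.toFinite _)
      simpa [Set.ncard_univ] using h2
    set X1 : Set (Fin m × Fin n) := R1 ×ˢ C1ᶜ with hX1def
    set X2 : Set (Fin m × Fin n) := R1ᶜ ×ˢ C1 with hX2def
    set B1 : Set (Fin m × Fin n) := R1 ×ˢ C1 with hB1def
    set B2 : Set (Fin m × Fin n) := R1ᶜ ×ˢ C1ᶜ with hB2def
    have hrowD : ∀ (z : Fin m × Fin n), z ∈ T → z.1 ∈ R1 → z ∈ Dset Dstar := by
      intro z hz h1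
      obtain ⟨w, hw, hw1⟩ := h1
      obtain ⟨hwT, hwc⟩ := mem_Dset.mp hw
      exact mem_Dset.mpr ⟨hz, (same_comp hz hwT (Or.inl hw1.symm)).trans hwc⟩
    have hcolD : ∀ (z : Fin m × Fin n), z ∈ T → z.2 ∈ C1 → z ∈ Dset Dstar := by
      intro z hz h1
      obtain ⟨w, hw, hw1⟩ := h1
      obtain ⟨hwT, hwc⟩ := mem_Dset.mp hw
      exact mem_Dset.mpr ⟨hz, (same_comp hz hwT (Or.inr hw1.symm)).trans hwc⟩
    have hX1S : X1 ⊆ Sset := by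
      rintro z ⟨h1, h2⟩
      by_contra hzS
      have hzT : z ∈ T := hzS
      exact h2 ⟨z, hrowD z hzT h1, rfl⟩
    have hX2S : X2 ⊆ Sset := by
      rintro z ⟨h1, h2⟩
      by_contra hzS
      have hzT : z ∈ T := hzS
      exact h1 ⟨z, hcolD z hzT h2, rfl⟩
    have hDcard : ∀ c : ((KK m n).induce T).ConnectedComponent, (Dset c).ncard ≤ S.card := by
      intro c
      obtain ⟨z, hz⟩ := Dset_nonempty c
      obtain ⟨hzT, hzc⟩ := mem_Dset.mp hz
      have hzsupp : (⟨z, hzT⟩ : ↥T) ∈ c.supp := (ConnectedComponent.mem_supp_iff _ _).mpr hzc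
      by_cases hcD : c = Dstar
      · subst hcD
        have hzR : z.1 ∈ R1 := ⟨z, hz, rfl⟩
        have hzC : z.2 ∈ C1 := ⟨z, hz, rfl⟩
        have hw : (z.1, z0.2) ∈ X1 := ⟨hzR, hz0nC⟩
        refine hsafeD _ (z.1, z0.2) ⟨z, hzT⟩ (hX1S hw) hzsupp ?_
        rw [kk_adj]
        exact Or.inr ⟨fun hs => hz0nC (by rw [show z0.2 = z.2 from hs]; exact hzC), rfl⟩
      · have hzR : z.1 ∈ RowsC c := ⟨z, hz, rfl⟩
        have hzC : z.2 ∈ ColsC c := ⟨z, hz, rfl⟩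
        have h1 : z.1 ∉ R1 := fun h => hcD (comp_eq_of_rows hzR h)
        have hw : (z.1, zs.2) ∈ X2 := ⟨h1, hzsC⟩
        refine hsafeD _ (z.1, zs.2) ⟨z, hzT⟩ (hX2S hw) hzsupp ?_
        rw [kk_adj]
        refine Or.inr ⟨fun hs => ?_, rfl⟩
        exact hcD (comp_eq_of_cols (show zs.2 ∈ ColsC c by
          rw [show zs.2 = z.2 from hs]; exact hzC) hzsC)
    have hkey : ∀ c : ((KK m n).induce T).ConnectedComponent, c ≠ Dstar →
        ¬(RowsC c).ncard ≤ m₁ → (ColsC c).ncard ≤ n₁ := by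
      intro c _ h1
      by_contra h2
      push_neg at h1 h2
      have h3 := hDstar c
      have h4 : (m₁ + 1) * (n₁ + 1) ≤ (RowsC c).ncard * (ColsC c).ncard :=
        Nat.mul_le_mul h1 h2
      nlinarith
    have hch : ∀ c : ((KK m n).induce T).ConnectedComponent,
        ∃ (fc : Fin m → Fin m) (gc : Fin n → Fin n),
          ((RowsC c).ncard ≤ m₁ → (RowsC c ⊆ fc ⁻¹' R1 ∧ Set.InjOn fc (RowsC c))) ∧
          (¬(RowsC c).ncard ≤ m₁ → c ≠ Dstar →
            (ColsC c ⊆ gc ⁻¹' C1 ∧ Set.InjOn gc (ColsC c))) := by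
      intro c
      haveI : Nonempty (Fin m) := ⟨⟨0, by omega⟩⟩
      haveI : Nonempty (Fin n) := ⟨⟨0, by omega⟩⟩
      by_cases h1 : (RowsC c).ncard ≤ m₁
      · obtain ⟨fc, hf1, hf2⟩ := Set.Finite.exists_injOn_of_encard_le
          (Set.toFinite (RowsC c)) (encard_le_of_ncard_le h1)
        exact ⟨fc, id, fun _ => ⟨hf1, hf2⟩, fun hno => absurd h1 hno⟩
      · by_cases h2 : c = Dstar
        · exact ⟨id, id, fun h => absurd h h1, fun _ hne => absurd h2 hne⟩
        · obtain ⟨gc, hg1, hg2⟩ := Set.Finite.exists_injOn_of_encard_le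
            (Set.toFinite (ColsC c)) (encard_le_of_ncard_le (hkey c h2 h1))
          exact ⟨id, gc, fun h => absurd h h1, fun _ _ => ⟨hg1, hg2⟩⟩
    choose fC gC hfC hgC using hch
    have hInjCard : (T ∩ B2).ncard ≤ X1.ncard + X2.ncard := by
      have step : (T ∩ B2).ncard ≤ (X1 ∪ X2).ncard := by
        apply Set.ncard_le_ncard_of_injOn
          (fun z => if hz : z ∈ T then
            (if (RowsC (((KK m n).induce T).connectedComponentMk ⟨z, hz⟩)).ncard ≤ m₁ then
              (fC (((KK m n).induce T).connectedComponentMk ⟨z, hz⟩) z.1, z.2)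
            else (z.1, gC (((KK m n).induce T).connectedComponentMk ⟨z, hz⟩) z.2)) else z)
        · rintro z ⟨hzT, hzB1, hzB2⟩
          simp only [dif_pos hzT]
          have hzD : z ∈ Dset (((KK m n).induce T).connectedComponentMk ⟨z, hzT⟩) :=
            mem_Dset.mpr ⟨hzT, rfl⟩
          have hzR : z.1 ∈ RowsC (((KK m n).induce T).connectedComponentMk ⟨z, hzT⟩) :=
            ⟨z, hzD, rfl⟩
          have hzC : z.2 ∈ ColsC (((KK m n).induce T).connectedComponentMk ⟨z, hzT⟩) :=
            ⟨z, hzD, rfl⟩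
          have hcne : ((KK m n).induce T).connectedComponentMk ⟨z, hzT⟩ ≠ Dstar :=
            fun h => hzB1 (by rw [hR1, ← h]; exact hzR)
          by_cases hrow : (RowsC (((KK m n).induce T).connectedComponentMk ⟨z, hzT⟩)).ncard ≤ m₁
          · rw [if_pos hrow]
            exact Set.mem_union_left _ ⟨(hfC _ hrow).1 hzR, hzB2⟩
          · rw [if_neg hrow]
            exact Set.mem_union_right _ ⟨hzB1, (hgC _ hrow hcne).1 hzC⟩
        · rintro z ⟨hzT, hzB1, hzB2⟩ w ⟨hwT, hwB1, hwB2⟩ heq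
          simp only [dif_pos hzT, dif_pos hwT] at heq
          have hzD : z ∈ Dset (((KK m n).induce T).connectedComponentMk ⟨z, hzT⟩) :=
            mem_Dset.mpr ⟨hzT, rfl⟩
          have hwD : w ∈ Dset (((KK m n).induce T).connectedComponentMk ⟨w, hwT⟩) :=
            mem_Dset.mpr ⟨hwT, rfl⟩
          have hzR : z.1 ∈ RowsC (((KK m n).induce T).connectedComponentMk ⟨z, hzT⟩) :=
            ⟨z, hzD, rfl⟩
          have hzC : z.2 ∈ ColsC (((KK m n).induce T).connectedComponentMk ⟨z, hzT⟩) :=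
            ⟨z, hzD, rfl⟩
          have hwR : w.1 ∈ RowsC (((KK m n).induce T).connectedComponentMk ⟨w, hwT⟩) :=
            ⟨w, hwD, rfl⟩
          have hwC : w.2 ∈ ColsC (((KK m n).induce T).connectedComponentMk ⟨w, hwT⟩) :=
            ⟨w, hwD, rfl⟩
          have hzcne : ((KK m n).induce T).connectedComponentMk ⟨z, hzT⟩ ≠ Dstar :=
            fun h => hzB1 (by rw [hR1, ← h]; exact hzR)
          have hwcne : ((KK m n).induce T).connectedComponentMk ⟨w, hwT⟩ ≠ Dstar :=
            fun h => hwB1 (by rw [hR1, ← h]; exact hwR)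
          by_cases h1 : (RowsC (((KK m n).induce T).connectedComponentMk ⟨z, hzT⟩)).ncard ≤ m₁ <;>
            by_cases h2 : (RowsC (((KK m n).induce T).connectedComponentMk ⟨w, hwT⟩)).ncard ≤ m₁
          · rw [if_pos h1, if_pos h2, Prod.mk.injEq] at heq
            have e2 : z.2 = w.2 := heq.2
            have hcc : ((KK m n).induce T).connectedComponentMk ⟨z, hzT⟩ =
                ((KK m n).induce T).connectedComponentMk ⟨w, hwT⟩ :=
              comp_eq_of_cols hzC (by rw [e2]; exact hwC)
            have e1f : fC (((KK m n).induce T).connectedComponentMk ⟨z, hzT⟩) z.1 =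
                fC (((KK m n).induce T).connectedComponentMk ⟨z, hzT⟩) w.1 := by
              have h3 := heq.1
              rw [← hcc] at h3
              exact h3
            have e1 : z.1 = w.1 := (hfC _ h1).2 hzR (by rw [hcc]; exact hwR) e1f
            exact Prod.ext e1 e2
          · exfalso
            have h3 : fC (((KK m n).induce T).connectedComponentMk ⟨z, hzT⟩) z.1 ∈ R1 :=
              (hfC _ h1).1 hzR
            rw [if_pos h1, if_neg h2, Prod.mk.injEq] at heq
            exact hwB1 (by rw [← heq.1]; exact h3)
          · exfalso
            have h3 : fC (((KK m n).induce T).connectedComponentMk ⟨w, hwT⟩) w.1 ∈ R1 :=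
              (hfC _ h2).1 hwR
            rw [if_neg h1, if_pos h2, Prod.mk.injEq] at heq
            exact hzB1 (by rw [heq.1]; exact h3)
          · rw [if_neg h1, if_neg h2, Prod.mk.injEq] at heq
            have e1 : z.1 = w.1 := heq.1
            have hcc : ((KK m n).induce T).connectedComponentMk ⟨z, hzT⟩ =
                ((KK m n).induce T).connectedComponentMk ⟨w, hwT⟩ :=
              comp_eq_of_rows hzR (by rw [e1]; exact hwR)
            have e2g : gC (((KK m n).induce T).connectedComponentMk ⟨z, hzT⟩) z.2 =
                gC (((KK m n).induce T).connectedComponentMk ⟨z, hzT⟩) w.2 := by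
              have h3 := heq.2
              rw [← hcc] at h3
              exact h3
            have e2 : z.2 = w.2 := (hgC _ h1 hzcne).2 hzC (by rw [hcc]; exact hwC) e2g
            exact Prod.ext e1 e2
      have hun : (X1 ∪ X2).ncard ≤ X1.ncard + X2.ncard := Set.ncard_union_le _ _
      omega
    -- counting
    have hcFm : Nat.card (Fin m) = m := by simp
    have hcFn : Nat.card (Fin n) = n := by simp
    have hR1c : R1ᶜ.ncard = m - m₁ := by
      have h := Set.ncard_add_ncard_compl R1
      rw [hcFm] at h; omega
    have hC1c : C1ᶜ.ncard = n - n₁ := by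
      have h := Set.ncard_add_ncard_compl C1
      rw [hcFn] at h; omega
    have nX1 : X1.ncard = m₁ * (n - n₁) := by rw [hX1def, ncard_sprod, hC1c]
    have nX2 : X2.ncard = (m - m₁) * n₁ := by rw [hX2def, ncard_sprod, hR1c]
    have nB1 : B1.ncard = m₁ * n₁ := by rw [hB1def, ncard_sprod]
    have nB2 : B2.ncard = (m - m₁) * (n - n₁) := by rw [hB2def, ncard_sprod, hR1c, hC1c]
    have hsplit : ∀ A : Set (Fin m × Fin n),
        A.ncard = (Sset ∩ A).ncard + (T ∩ A).ncard := by
      intro A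
      rw [Set.inter_comm Sset A, Set.inter_comm T A, hT,
        ← Set.ncard_inter_add_ncard_diff_eq_ncard A Sset, Set.diff_eq]
    have hTB1 : T ∩ B1 = Dset Dstar := by
      ext z
      constructor
      · rintro ⟨hzT, hzR, _⟩
        exact hrowD z hzT hzR
      · intro hz
        exact ⟨Dset_subset Dstar hz, ⟨z, hz, rfl⟩, ⟨z, hz, rfl⟩⟩
    have hB1count : m₁ * n₁ = (Sset ∩ B1).ncard + (Dset Dstar).ncard := by
      rw [← nB1, hsplit B1, hTB1]
    have hB2count : (m - m₁) * (n - n₁) = (Sset ∩ B2).ncard + (T ∩ B2).ncard := by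
      rw [← nB2, hsplit B2]
    have hcover : Sset = X1 ∪ X2 ∪ (Sset ∩ B1) ∪ (Sset ∩ B2) := by
      apply Set.Subset.antisymm
      · intro z hz
        by_cases h1 : z.1 ∈ R1 <;> by_cases h2 : z.2 ∈ C1
        · exact Or.inl (Or.inr ⟨hz, h1, h2⟩)
        · exact Or.inl (Or.inl (Or.inl ⟨h1, h2⟩))
        · exact Or.inl (Or.inl (Or.inr ⟨h1, h2⟩))
        · exact Or.inr ⟨hz, h1, h2⟩
      · intro z hz
        rcases hz with ((hz | hz) | hz) | hz
        · exact hX1S hz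
        · exact hX2S hz
        · exact hz.1
        · exact hz.1
    have d12 : Disjoint X1 X2 := by
      rw [Set.disjoint_left]
      rintro z ⟨h1, _⟩ ⟨h1', _⟩
      exact h1' h1
    have d3 : Disjoint (X1 ∪ X2) (Sset ∩ B1) := by
      rw [Set.disjoint_left]
      rintro z hz ⟨_, hb1, hb2⟩
      rcases hz with ⟨_, h2⟩ | ⟨h1, _⟩
      · exact h2 hb2
      · exact h1 hb1
    have d4 : Disjoint (X1 ∪ X2 ∪ (Sset ∩ B1)) (Sset ∩ B2) := by
      rw [Set.disjoint_left]
      rintro z hz ⟨_, hb1, hb2⟩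
      rcases hz with (⟨h1, _⟩ | ⟨_, h2⟩) | ⟨_, hc1, _⟩
      · exact hb1 h1
      · exact hb2 h2
      · exact hb1 hc1
    have hScount : S.card = X1.ncard + X2.ncard + (Sset ∩ B1).ncard + (Sset ∩ B2).ncard := by
      rw [← hScard]
      calc Sset.ncard = (X1 ∪ X2 ∪ (Sset ∩ B1) ∪ (Sset ∩ B2)).ncard := by rw [← hcover]
        _ = X1.ncard + X2.ncard + (Sset ∩ B1).ncard + (Sset ∩ B2).ncard := by
          rw [Set.ncard_union_eq d4, Set.ncard_union_eq d3, Set.ncard_union_eq d12]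
    have hpos1 : 1 ≤ (Sset ∩ B1).ncard + (Sset ∩ B2).ncard := by
      by_contra hcc
      push_neg at hcc
      have e1 : (Sset ∩ B1) = ∅ := by
        have h0 : (Sset ∩ B1).ncard = 0 := by omega
        exact (Set.ncard_eq_zero (Set.toFinite _)).mp h0
      have e2 : (Sset ∩ B2) = ∅ := by
        have h0 : (Sset ∩ B2).ncard = 0 := by omega
        exact (Set.ncard_eq_zero (Set.toFinite _)).mp h0
      have haX : (zs.1, z0.2) ∈ X1 := ⟨hzsR, hz0nC⟩
      have hbX : (z0.1, zs.2) ∈ X2 := ⟨hz0nR, hzsC⟩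
      have hreach := hconn.preconnected ⟨(zs.1, z0.2), hX1S haX⟩ ⟨(z0.1, zs.2), hX2S hbX⟩
      have hP : ∀ p q : Fin m × Fin n, p ∈ Sset → q ∈ Sset → (KK m n).Adj p q →
          p.1 ∈ R1 → q.1 ∈ R1 := by
        intro p q hp hq hadj h1
        rw [kk_adj] at hadj
        rcases hadj with ⟨hne, heq⟩ | ⟨hne, heq⟩
        · have hp2 : p.2 ∉ C1 := fun hc2 =>
            (Set.eq_empty_iff_forall_notMem.mp e1) p ⟨hp, h1, hc2⟩
          have hq2 : q.2 ∉ C1 := by rw [← heq]; exact hp2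
          by_contra hq1
          exact (Set.eq_empty_iff_forall_notMem.mp e2) q ⟨hq, hq1, hq2⟩
        · rw [← heq]; exact h1
      have hfin2 := reach_invariant (P := fun v : Fin m × Fin n => v.1 ∈ R1) hP hreach hzsR
      exact hz0nR hfin2
    -- final arithmetic
    obtain ⟨m₂, hm2⟩ : ∃ m₂, m = m₁ + m₂ := ⟨m - m₁, by omega⟩
    obtain ⟨n₂, hn2⟩ : ∃ n₂, n = n₁ + n₂ := ⟨n - n₁, by omega⟩
    have hmm1 : m - m₁ = m₂ := by omega
    have hnn1 : n - n₁ = n₂ := by omega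
    rw [hnn1] at nX1
    rw [hmm1] at nX2
    rw [hmm1, hnn1] at hB2count
    rw [nX1, nX2] at hScount hInjCard
    have hMN : (m : ℤ) * n = (m₁ : ℤ) * n₁ + (m₂ : ℤ) * n₂ +
        ((m₁ : ℤ) * n₂ + (m₂ : ℤ) * n₁) := by
      have e1 : (m : ℤ) = (m₁ : ℤ) + m₂ := by exact_mod_cast congrArg (Nat.cast : ℕ → ℤ) hm2
      have e2 : (n : ℤ) = (n₁ : ℤ) + n₂ := by exact_mod_cast congrArg (Nat.cast : ℕ → ℤ) hn2
      rw [e1, e2]; ring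
    have zS : (S.card : ℤ) = (m₁ : ℤ) * n₂ + (m₂ : ℤ) * n₁ +
        ((Sset ∩ B1).ncard : ℤ) + ((Sset ∩ B2).ncard : ℤ) := by exact_mod_cast hScount
    have zB1 : (m₁ : ℤ) * n₁ = ((Sset ∩ B1).ncard : ℤ) + ((Dset Dstar).ncard : ℤ) := by
      exact_mod_cast hB1count
    have zd : ((Dset Dstar).ncard : ℤ) ≤ (S.card : ℤ) := by exact_mod_cast hDcard Dstar
    have zB2 : (m₂ : ℤ) * n₂ = ((Sset ∩ B2).ncard : ℤ) + ((T ∩ B2).ncard : ℤ) := by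
      exact_mod_cast hB2count
    have zt2 : ((T ∩ B2).ncard : ℤ) ≤ (m₁ : ℤ) * n₂ + (m₂ : ℤ) * n₁ := by
      exact_mod_cast hInjCard
    have zpos : (1 : ℤ) ≤ ((Sset ∩ B1).ncard : ℤ) + ((Sset ∩ B2).ncard : ℤ) := by
      exact_mod_cast hpos1
    apply alpha_le m₁ m₂ n₁ n₂ hm₁pos (by omega) hn₁pos (by omega) (by omega) (by omega)
    · have hb1 : (m₁ : ℤ) * n₁ ≤ (m₁ : ℤ) * n₂ + (m₂ : ℤ) * n₁ +
          2 * (((Sset ∩ B1).ncard : ℤ) + ((Sset ∩ B2).ncard : ℤ)) := by linarith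
      have hb2 : (m₂ : ℤ) * n₂ ≤ (m₁ : ℤ) * n₂ + (m₂ : ℤ) * n₁ +
          2 * (((Sset ∩ B1).ncard : ℤ) + ((Sset ∩ B2).ncard : ℤ)) := by linarith
      have hb := max_le hb1 hb2
      rw [hMN]
      linarith
    · rw [hMN]
      linarith

end CSN

namespace CSN

open Set

lemma card_filter_fin_lt {M a : ℕ} (h : a ≤ M) :
    (Finset.univ.filter (fun i : Fin M => (i : ℕ) < a)).card = a := by
  have he : Finset.univ.filter (fun i : Fin M => (i : ℕ) < a) =
      Finset.map ⟨Fin.castLE h, Fin.castLE_injective h⟩ Finset.univ := by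
    ext i
    simp only [Finset.mem_filter, Finset.mem_univ, true_and, Finset.mem_map,
      Function.Embedding.coeFn_mk]
    constructor
    · intro hi
      exact ⟨⟨(i : ℕ), hi⟩, by ext; simp [Fin.castLE]⟩
    · rintro ⟨j, _, rfl⟩
      exact j.2
  rw [he, Finset.card_map, Finset.card_univ, Fintype.card_fin]

lemma small_block_le_cross {m₁ m₂ n₁ n₂ : ℕ} (h : m₁ * n₁ ≤ m₂ * n₂) :
    m₁ * n₁ ≤ m₁ * n₂ + m₂ * n₁ := by
  rcases le_or_gt n₁ n₂ with h1 | h1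
  · exact le_trans (Nat.mul_le_mul_left _ h1) (Nat.le_add_right _ _)
  · have h2 : m₁ ≤ m₂ := by nlinarith
    exact le_trans (Nat.mul_le_mul_right _ h2) (Nat.le_add_left _ _)

lemma univ_css (m n : ℕ) (hm : 0 < m) (hn : 0 < n) :
    IsConnectedSafeSet (KK m n) Finset.univ := by
  constructor
  · intro C D h
    exfalso
    obtain ⟨v, -⟩ := D.exists_rep
    have h2 := v.2
    simp at h2
  · haveI : Nonempty (Fin m) := ⟨⟨0, hm⟩⟩
    haveI : Nonempty (Fin n) := ⟨⟨0, hn⟩⟩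
    have hc : (KK m n).Connected := Connected.boxProd connected_top connected_top
    have h2 : ((KK m n).induce Set.univ).Connected :=
      ((induceUnivIso (KK m n)).connected_iff).mpr hc
    rw [Finset.coe_univ]
    exact h2

lemma alpha_set_nonempty (m n : ℕ) (hm : 3 ≤ m) (hn : 3 ≤ n) :
    {k : ℕ | ∃ m₁ m₂ n₁ n₂ : ℕ, 0 < m₁ ∧ 0 < m₂ ∧ 0 < n₁ ∧ 0 < n₂ ∧
      m₁ + m₂ = m ∧ n₁ + n₂ = n ∧
      (k : ℤ) = (m : ℤ) * n - (m₁ : ℤ) * n₁ - (m₂ : ℤ) * n₂ +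
        max ⌈((max ((m₁ : ℤ) * n₁) ((m₂ : ℤ) * n₂) - (m : ℤ) * n + (m₁ : ℤ) * n₁ +
              (m₂ : ℤ) * n₂ : ℤ) : ℚ) / 2⌉ 1}.Nonempty := by
  set R : ℤ := (m : ℤ) * n - (1 : ℤ) * 1 - ((m - 1 : ℕ) : ℤ) * ((n - 1 : ℕ) : ℤ) +
      max ⌈((max ((1 : ℤ) * 1) (((m - 1 : ℕ) : ℤ) * ((n - 1 : ℕ) : ℤ)) - (m : ℤ) * n +
            (1 : ℤ) * 1 + ((m - 1 : ℕ) : ℤ) * ((n - 1 : ℕ) : ℤ) : ℤ) : ℚ) / 2⌉ 1 with hR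
  have e1 : ((m - 1 : ℕ) : ℤ) = (m : ℤ) - 1 := by
    have : (1 : ℕ) ≤ m := by omega
    push_cast [Nat.cast_sub this]; ring
  have e2 : ((n - 1 : ℕ) : ℤ) = (n : ℤ) - 1 := by
    have : (1 : ℕ) ≤ n := by omega
    push_cast [Nat.cast_sub this]; ring
  have hcross : (m : ℤ) * n - (1 : ℤ) * 1 - ((m - 1 : ℕ) : ℤ) * ((n - 1 : ℕ) : ℤ) =
      (m : ℤ) + n - 2 := by rw [e1, e2]; ring
  have hR0 : 0 ≤ R := by
    have h6 : (1 : ℤ) ≤ max ⌈((max ((1 : ℤ) * 1) (((m - 1 : ℕ) : ℤ) * ((n - 1 : ℕ) : ℤ)) -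
        (m : ℤ) * n + (1 : ℤ) * 1 + ((m - 1 : ℕ) : ℤ) * ((n - 1 : ℕ) : ℤ) : ℤ) : ℚ) / 2⌉ 1 :=
      le_max_right _ _
    have h7 : (3 : ℤ) ≤ (m : ℤ) := by exact_mod_cast hm
    have h8 : (3 : ℤ) ≤ (n : ℤ) := by exact_mod_cast hn
    rw [hR, hcross]; linarith
  refine ⟨R.toNat, 1, m - 1, 1, n - 1, by omega, by omega, by omega, by omega, by omega,
    by omega, ?_⟩
  rw [Int.toNat_of_nonneg hR0, hR]
  push_cast
  norm_num

end CSN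

namespace CSN

open Set

set_option maxHeartbeats 1600000 in
lemma upper_bound {m n : ℕ} (hm : 3 ≤ m) (hn : 3 ≤ n) :
    ∃ S : Finset (Fin m × Fin n), IsConnectedSafeSet (KK m n) S ∧ S.card = alpha m n := by
  classical
  have hmain : ∀ (m₁ m₂ n₁ n₂ : ℕ), 0 < m₁ → 0 < m₂ → 0 < n₁ → 0 < n₂ →
      m₁ + m₂ = m → n₁ + n₂ = n → m₁ * n₁ ≤ m₂ * n₂ →
      ((alpha m n : ℤ) = (m : ℤ) * n - (m₁ : ℤ) * n₁ - (m₂ : ℤ) * n₂ +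
        max ⌈((max ((m₁ : ℤ) * n₁) ((m₂ : ℤ) * n₂) - (m : ℤ) * n + (m₁ : ℤ) * n₁ +
              (m₂ : ℤ) * n₂ : ℤ) : ℚ) / 2⌉ 1) →
      ∃ S : Finset (Fin m × Fin n), IsConnectedSafeSet (KK m n) S ∧ S.card = alpha m n := by
    intro m₁ m₂ n₁ n₂ h1 h2 h3 h4 hmm hnn hord heq
    -- numeric facts
    have hmaxeq : max ((m₁ : ℤ) * n₁) ((m₂ : ℤ) * n₂) = (m₂ : ℤ) * n₂ :=
      max_eq_right (by exact_mod_cast Nat.cast_le.mpr hord)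
    have em : (m : ℤ) = (m₁ : ℤ) + m₂ := by exact_mod_cast (congrArg (Nat.cast : ℕ → ℤ) hmm).symm
    have en : (n : ℤ) = (n₁ : ℤ) + n₂ := by exact_mod_cast (congrArg (Nat.cast : ℕ → ℤ) hnn).symm
    have hcr : (m : ℤ) * n - (m₁ : ℤ) * n₁ - (m₂ : ℤ) * n₂ =
        ((m₁ * n₂ + m₂ * n₁ : ℕ) : ℤ) := by rw [em, en]; push_cast; ring
    have hinner : (max ((m₁ : ℤ) * n₁) ((m₂ : ℤ) * n₂) - (m : ℤ) * n + (m₁ : ℤ) * n₁ +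
        (m₂ : ℤ) * n₂ : ℤ) = ((m₂ * n₂ : ℕ) : ℤ) - ((m₁ * n₂ + m₂ * n₁ : ℕ) : ℤ) := by
      rw [hmaxeq, em, en]; push_cast; ring
    rw [hinner, hcr] at heq
    set cr : ℕ := m₁ * n₂ + m₂ * n₁ with hcrdef
    set b : ℕ := m₂ * n₂ with hbdef
    set tz : ℤ := max ⌈((((b : ℤ) - (cr : ℤ)) : ℤ) : ℚ) / 2⌉ 1 with htzdef
    have heq' : (alpha m n : ℤ) = (cr : ℤ) + tz := by
      rw [heq, htzdef]
    have ht1 : 1 ≤ tz := le_max_right _ _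
    have ht2 : (b : ℤ) - cr ≤ 2 * tz := by
      have hc1 := le_two_ceil_half ((b : ℤ) - cr)
      have hc2 : ⌈((((b : ℤ) - (cr : ℤ)) : ℤ) : ℚ) / 2⌉ ≤ tz := by
        rw [htzdef]; exact le_max_left _ _
      linarith
    have ht3 : tz ≤ b := by
      rw [htzdef]
      apply max_le
      · apply ceil_half_le
        have hcr0 : (0 : ℤ) ≤ (cr : ℤ) := by positivity
        have hb0 : (0 : ℤ) ≤ (b : ℤ) := by positivity
        linarith
      · have hb1 : 1 ≤ b := Nat.mul_pos h2 h4
        exact_mod_cast hb1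
    set t₀ : ℕ := tz.toNat with ht0def
    have htz0 : (t₀ : ℤ) = tz := Int.toNat_of_nonneg (by linarith)
    have halpha : alpha m n = cr + t₀ := by
      have hx : (alpha m n : ℤ) = ((cr + t₀ : ℕ) : ℤ) := by
        rw [heq', ← htz0]; push_cast; ring
      exact_mod_cast hx
    have ht1' : 1 ≤ t₀ := by
      have hx : (1 : ℤ) ≤ (t₀ : ℤ) := by rw [htz0]; exact ht1
      exact_mod_cast hx
    have ht3' : t₀ ≤ m₂ * n₂ := by
      have hx : (t₀ : ℤ) ≤ ((m₂ * n₂ : ℕ) : ℤ) := by rw [htz0]; exact ht3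
      exact_mod_cast hx
    have ht2' : m₂ * n₂ ≤ cr + 2 * t₀ := by
      have hx : ((m₂ * n₂ : ℕ) : ℤ) ≤ ((cr + 2 * t₀ : ℕ) : ℤ) := by
        push_cast [htz0]
        push_cast at ht2
        linarith
      exact_mod_cast hx
    have hb_a : m₁ * n₁ ≤ cr := small_block_le_cross hord
    -- the construction
    set R1 : Finset (Fin m) := Finset.univ.filter (fun i => (i : ℕ) < m₁) with hR1def
    set C1 : Finset (Fin n) := Finset.univ.filter (fun j => (j : ℕ) < n₁) with hC1def
    have hR1card : R1.card = m₁ := card_filter_fin_lt (by omega)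
    have hC1card : C1.card = n₁ := card_filter_fin_lt (by omega)
    have hR1c : R1ᶜ.card = m₂ := by
      rw [Finset.card_compl, hR1card, Fintype.card_fin]; omega
    have hC1c : C1ᶜ.card = n₂ := by
      rw [Finset.card_compl, hC1card, Fintype.card_fin]; omega
    have hmemR1 : ∀ i : Fin m, i ∈ R1 ↔ (i : ℕ) < m₁ := fun i => by
      simp [hR1def]
    have hmemC1 : ∀ j : Fin n, j ∈ C1 ↔ (j : ℕ) < n₁ := fun j => by
      simp [hC1def]
    have hB2card : (R1ᶜ ×ˢ C1ᶜ).card = m₂ * n₂ := by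
      rw [Finset.card_product, hR1c, hC1c]
    obtain ⟨E, hEsub, hEcard⟩ := Finset.exists_subset_card_eq
      (show t₀ ≤ (R1ᶜ ×ˢ C1ᶜ).card by rw [hB2card]; exact ht3')
    set S : Finset (Fin m × Fin n) := (R1 ×ˢ C1ᶜ) ∪ (R1ᶜ ×ˢ C1) ∪ E with hSdef
    have hmemS : ∀ z : Fin m × Fin n, z ∈ S ↔
        ((z.1 ∈ R1 ∧ z.2 ∉ C1) ∨ (z.1 ∉ R1 ∧ z.2 ∈ C1) ∨ z ∈ E) := by
      intro z
      simp [hSdef, Finset.mem_union, Finset.mem_product, or_assoc]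
    have hEB2 : ∀ z ∈ E, z.1 ∉ R1 ∧ z.2 ∉ C1 := by
      intro z hz
      have hx := hEsub hz
      simp only [Finset.mem_product, Finset.mem_compl] at hx
      exact hx
    have hd1 : Disjoint (R1 ×ˢ C1ᶜ) (R1ᶜ ×ˢ C1) := by
      rw [Finset.disjoint_left]
      intro z hz1 hz2
      simp only [Finset.mem_product, Finset.mem_compl] at hz1 hz2
      exact hz2.1 hz1.1
    have hd2 : Disjoint ((R1 ×ˢ C1ᶜ) ∪ (R1ᶜ ×ˢ C1)) E := by
      rw [Finset.disjoint_left]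
      intro z hz1 hz2
      obtain ⟨he1, he2⟩ := hEB2 z hz2
      rcases Finset.mem_union.mp hz1 with hz | hz <;>
        simp only [Finset.mem_product, Finset.mem_compl] at hz
      · exact he1 hz.1
      · exact he2 hz.2
    have honecard : S.card = cr + t₀ := by
      rw [hSdef, Finset.card_union_of_disjoint hd2, Finset.card_union_of_disjoint hd1,
        Finset.card_product, Finset.card_product, hR1card, hC1c, hR1c, hC1card, hEcard,
        hcrdef]
    -- connectivity
    have hubm : (0 : ℕ) < m := by omega
    have hubn : n₁ < n := by omega
    set hub : Fin m × Fin n := (⟨0, hubm⟩, ⟨n₁, hubn⟩) with hhubdef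
    have hhubS : hub ∈ S := by
      rw [hmemS]
      exact Or.inl ⟨(hmemR1 _).mpr (by simpa using h1), fun hc => by
        have := (hmemC1 _).mp hc
        exact lt_irrefl n₁ this⟩
    have hhubS' : hub ∈ (S : Set (Fin m × Fin n)) := hhubS
    have hstep : ∀ (p q : Fin m × Fin n) (hp : p ∈ (S : Set (Fin m × Fin n)))
        (hq : q ∈ (S : Set (Fin m × Fin n))), (p = q ∨ (KK m n).Adj p q) →
        ((KK m n).induce (S : Set (Fin m × Fin n))).Reachable ⟨p, hp⟩ ⟨q, hq⟩ := by
      rintro p q hp hq (rfl | hadj)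
      · exact Reachable.refl _
      · exact SimpleGraph.Adj.reachable (induce_adj'.mpr hadj)
    have hadj2 : ∀ p q : Fin m × Fin n, (p.1 = q.1 ∨ p.2 = q.2) →
        (p = q ∨ (KK m n).Adj p q) := by
      intro p q h
      by_cases he : p = q
      · exact Or.inl he
      · right
        rw [kk_adj]
        rcases h with h | h
        · exact Or.inr ⟨fun hs => he (Prod.ext h hs), h⟩
        · exact Or.inl ⟨fun hs => he (Prod.ext hs h), h⟩
    have hreach_hub : ∀ (z : Fin m × Fin n) (hz : z ∈ (S : Set (Fin m × Fin n))),
        ((KK m n).induce (S : Set (Fin m × Fin n))).Reachable ⟨z, hz⟩ ⟨hub, hhubS'⟩ := by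
      intro z hz
      have hzS : z ∈ S := hz
      rcases (hmemS z).mp hzS with ⟨ha1, ha2⟩ | ⟨hb1, hb2⟩ | hE
      · -- first arm
        have hmidS : (z.1, hub.2) ∈ S := by
          rw [hmemS]
          refine Or.inl ⟨ha1, fun hc => ?_⟩
          have := (hmemC1 _).mp hc
          simp [hhubdef] at this
        have hmidS' : (z.1, hub.2) ∈ (S : Set (Fin m × Fin n)) := hmidS
        exact (hstep z (z.1, hub.2) hz hmidS' (hadj2 _ _ (Or.inl rfl))).trans
          (hstep _ hub hmidS' hhubS' (hadj2 _ _ (Or.inr rfl)))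
      · -- second arm, through E
        have hEne : E.Nonempty := Finset.card_pos.mp (by rw [hEcard]; omega)
        obtain ⟨e, heE⟩ := hEne
        obtain ⟨he1, he2⟩ := hEB2 e heE
        have hm1S : (e.1, z.2) ∈ S := by rw [hmemS]; exact Or.inr (Or.inl ⟨he1, hb2⟩)
        have hm1S' : (e.1, z.2) ∈ (S : Set (Fin m × Fin n)) := hm1S
        have hm2S : e ∈ S := by rw [hmemS]; exact Or.inr (Or.inr heE)
        have hm2S' : e ∈ (S : Set (Fin m × Fin n)) := hm2S
        have hm3S : (hub.1, e.2) ∈ S := by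
          rw [hmemS]
          exact Or.inl ⟨(hmemR1 _).mpr (by simpa [hhubdef] using h1), he2⟩
        have hm3S' : (hub.1, e.2) ∈ (S : Set (Fin m × Fin n)) := hm3S
        refine (hstep z (e.1, z.2) hz hm1S' (hadj2 _ _ (Or.inr rfl))).trans
          ((hstep _ e hm1S' hm2S' (hadj2 _ _ (Or.inl rfl))).trans
            ((hstep e _ hm2S' hm3S' (hadj2 _ _ (Or.inr rfl))).trans
              (hstep _ hub hm3S' hhubS' (hadj2 _ _ (Or.inl rfl)))))
      · -- z in E
        obtain ⟨he1, he2⟩ := hEB2 z hE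
        have hm3S : (hub.1, z.2) ∈ S := by
          rw [hmemS]
          exact Or.inl ⟨(hmemR1 _).mpr (by simpa [hhubdef] using h1), he2⟩
        have hm3S' : (hub.1, z.2) ∈ (S : Set (Fin m × Fin n)) := hm3S
        exact (hstep z (hub.1, z.2) hz hm3S' (hadj2 _ _ (Or.inr rfl))).trans
          (hstep _ hub hm3S' hhubS' (hadj2 _ _ (Or.inl rfl)))
    have hconnS : ((KK m n).induce (S : Set (Fin m × Fin n))).Connected := by
      rw [connected_iff]
      constructor
      · intro u v
        exact (hreach_hub ↑u u.2).trans (hreach_hub ↑v v.2).symm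
      · exact ⟨⟨hub, hhubS'⟩⟩
    -- safety
    have himp1 : ∀ w : Fin m × Fin n, w ∉ S → w.1 ∈ R1 → w.2 ∈ C1 := by
      intro w hw hr
      by_contra h2
      exact hw ((hmemS w).mpr (Or.inl ⟨hr, h2⟩))
    have himp2 : ∀ w : Fin m × Fin n, w ∉ S → w.1 ∉ R1 → w.2 ∉ C1 := by
      intro w hw hr hc
      exact hw ((hmemS w).mpr (Or.inr (Or.inl ⟨hr, hc⟩)))
    have hsafe : IsSafeSet (KK m n) S := by
      intro C D _
      have hC : Nat.card C.supp = S.card := by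
        rw [supp_ncard_eq hconnS.preconnected C, Set.ncard_coe_finset]
      rw [hC, Dset_ncard D]
      obtain ⟨z, hz⟩ := Dset_nonempty D
      obtain ⟨hzT, hzc⟩ := mem_Dset.mp hz
      have hzT' : z ∉ S := hzT
      by_cases hcase : z.1 ∈ R1
      · have hsub : Dset D ⊆ (↑R1 : Set (Fin m)) ×ˢ (↑C1 : Set (Fin n)) := by
          intro w hw
          obtain ⟨hwT, hwc⟩ := mem_Dset.mp hw
          have hreach : ((KK m n).induce ((S : Set (Fin m × Fin n))ᶜ)).Reachable
              ⟨z, hzT⟩ ⟨w, hwT⟩ := ConnectedComponent.exact (hzc.trans hwc.symm)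
          have hP : ∀ p q : Fin m × Fin n, p ∈ (S : Set (Fin m × Fin n))ᶜ →
              q ∈ (S : Set (Fin m × Fin n))ᶜ → (KK m n).Adj p q → p.1 ∈ R1 → q.1 ∈ R1 := by
            intro p q hp hq hpq hr
            rw [kk_adj] at hpq
            rcases hpq with ⟨hne, hsnd⟩ | ⟨hne, hfst⟩
            · have hp2 : p.2 ∈ C1 := himp1 p hp hr
              have hq2 : q.2 ∈ C1 := by rw [← hsnd]; exact hp2
              by_contra hq1
              exact (himp2 q hq hq1) hq2
            · rw [← hfst]; exact hr
          have hw1 : w.1 ∈ R1 :=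
            reach_invariant (P := fun v : Fin m × Fin n => v.1 ∈ R1) hP hreach hcase
          exact ⟨hw1, himp1 w hwT hw1⟩
        calc (Dset D).ncard ≤ ((↑R1 : Set (Fin m)) ×ˢ (↑C1 : Set (Fin n))).ncard :=
              Set.ncard_le_ncard hsub (Set.toFinite _)
          _ = m₁ * n₁ := by
              rw [ncard_sprod, Set.ncard_coe_finset, Set.ncard_coe_finset, hR1card, hC1card]
          _ ≤ S.card := by rw [honecard]; omega
      · have hsub : Dset D ⊆ ((↑(R1ᶜ ×ˢ C1ᶜ) : Set (Fin m × Fin n)) \ ↑E) := by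
          intro w hw
          obtain ⟨hwT, hwc⟩ := mem_Dset.mp hw
          have hreach : ((KK m n).induce ((S : Set (Fin m × Fin n))ᶜ)).Reachable
              ⟨z, hzT⟩ ⟨w, hwT⟩ := ConnectedComponent.exact (hzc.trans hwc.symm)
          have hP : ∀ p q : Fin m × Fin n, p ∈ (S : Set (Fin m × Fin n))ᶜ →
              q ∈ (S : Set (Fin m × Fin n))ᶜ → (KK m n).Adj p q → p.1 ∉ R1 → q.1 ∉ R1 := by
            intro p q hp hq hpq hr
            rw [kk_adj] at hpq
            rcases hpq with ⟨hne, hsnd⟩ | ⟨hne, hfst⟩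
            · have hp2 : p.2 ∉ C1 := himp2 p hp hr
              have hq2 : q.2 ∉ C1 := by rw [← hsnd]; exact hp2
              intro hq1
              exact hq2 (himp1 q hq hq1)
            · rw [← hfst]; exact hr
          have hw1 : w.1 ∉ R1 :=
            reach_invariant (P := fun v : Fin m × Fin n => v.1 ∉ R1) hP hreach hcase
          constructor
          · have : w ∈ R1ᶜ ×ˢ C1ᶜ := Finset.mem_product.mpr
              ⟨Finset.mem_compl.mpr hw1, Finset.mem_compl.mpr (himp2 w hwT hw1)⟩
            exact this
          · intro hwE
            have hwE' : w ∈ E := hwE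
            exact hwT ((hmemS w).mpr (Or.inr (Or.inr hwE')))
        calc (Dset D).ncard ≤ ((↑(R1ᶜ ×ˢ C1ᶜ) : Set (Fin m × Fin n)) \ ↑E).ncard :=
              Set.ncard_le_ncard hsub (Set.toFinite _)
          _ = m₂ * n₂ - t₀ := by
              rw [Set.ncard_diff (Finset.coe_subset.mpr hEsub),
                Set.ncard_coe_finset, Set.ncard_coe_finset, hB2card, hEcard]
          _ ≤ S.card := by rw [honecard]; omega
    exact ⟨S, ⟨hsafe, hconnS⟩, by rw [honecard, halpha]⟩
  obtain ⟨m₁, m₂, n₁, n₂, h1, h2, h3, h4, hmm, hnn, heq⟩ :=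
    Nat.sInf_mem (alpha_set_nonempty m n hm hn)
  rcases le_total (m₁ * n₁) (m₂ * n₂) with hord | hord
  · exact hmain m₁ m₂ n₁ n₂ h1 h2 h3 h4 hmm hnn hord heq
  · refine hmain m₂ m₁ n₂ n₁ h2 h1 h4 h3 (by omega) (by omega) hord ?_
    have heq2 : (alpha m n : ℤ) = (m : ℤ) * n - (m₁ : ℤ) * n₁ - (m₂ : ℤ) * n₂ +
        max ⌈((max ((m₁ : ℤ) * n₁) ((m₂ : ℤ) * n₂) - (m : ℤ) * n + (m₁ : ℤ) * n₁ +
              (m₂ : ℤ) * n₂ : ℤ) : ℚ) / 2⌉ 1 := heq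
    rw [heq2]
    have hA : (max ((m₂ : ℤ) * n₂) ((m₁ : ℤ) * n₁) - (m : ℤ) * n + (m₂ : ℤ) * n₂ +
        (m₁ : ℤ) * n₁ : ℤ) = (max ((m₁ : ℤ) * n₁) ((m₂ : ℤ) * n₂) - (m : ℤ) * n +
        (m₁ : ℤ) * n₁ + (m₂ : ℤ) * n₂ : ℤ) := by
      rw [max_comm]; ring
    rw [hA]; ring

end CSN

theorem connected_safe_number_eq_alpha (m n : ℕ) (hm : 3 ≤ m) (hn : 3 ≤ n) :
    connectedSafeNumber (KK m n) = alpha m n := by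
  apply le_antisymm
  · obtain ⟨S, hS, hcard⟩ := CSN.upper_bound hm hn
    calc connectedSafeNumber (KK m n) ≤ S.card := Nat.sInf_le ⟨S, hS, rfl⟩
      _ = alpha m n := hcard
  · have hne : {k | ∃ S : Finset (Fin m × Fin n),
        IsConnectedSafeSet (KK m n) S ∧ S.card = k}.Nonempty :=
      ⟨Finset.univ.card, Finset.univ, CSN.univ_css m n (by omega) (by omega), rfl⟩
    obtain ⟨S, hS, hcard⟩ := Nat.sInf_mem hne
    calc alpha m n ≤ S.card := CSN.lower_bound hm hn S hS.1 hS.2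
      _ = connectedSafeNumber (KK m n) := hcard
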